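/- arXiv:2103.15291 — 4 statements merged into one kernel-verified Lean document; each statement's English description precedes it below -/
import Mathlib

section
/- For n ≥ 0, ∑_{j=0}^{n} S(n+1, j+1) · c_j = (2^{n+1} - 1)/(n+1), where c_j are the classical Cauchy numbers and S the Stirling numbers of the second kind. -/
open Finset

/-- Unsigned Stirling numbers of the first kind. -/
def stirling1 : ℕ → ℕ → ℕ
  | 0, 0 => 1
  | 0, _ + 1 => 0
  | _ + 1, 0 => 0
  | n + 1, k + 1 => n * stirling1 n (k + 1) + stirling1 n k

/-- Stirling numbers of the second kind. -/
def stirling2 : ℕ → ℕ → ℕ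
  | 0, 0 => 1
  | 0, _ + 1 => 0
  | _ + 1, 0 => 0
  | n + 1, k + 1 => (k + 1) * stirling2 n (k + 1) + stirling2 n k

/-- Unsigned r-Stirling numbers of the first kind. -/
def rStirling1 (r : ℕ) : ℕ → ℕ → ℕ
  | 0, m => if r = 0 ∧ m = 0 then 1 else 0
  | n + 1, m =>
    if n + 1 < r then 0
    else if n + 1 = r then (if m = r then 1 else 0)
    else n * rStirling1 r n m + (match m with | 0 => 0 | m' + 1 => rStirling1 r n m')

/-- r-Stirling numbers of the second kind. -/
def rStirling2 (r : ℕ) : ℕ → ℕ → ℕ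
  | 0, m => if r = 0 ∧ m = 0 then 1 else 0
  | n + 1, m =>
    if n + 1 < r then 0
    else if n + 1 = r then (if m = r then 1 else 0)
    else m * rStirling2 r n m + (match m with | 0 => 0 | m' + 1 => rStirling2 r n m')

/-- Poly-Cauchy numbers of the first kind `c_n^{(k)}`. -/
noncomputable def polyCauchy (k : ℤ) (n : ℕ) : ℝ :=
  ∑ ℓ ∈ range (n + 1), (-1 : ℝ) ^ (n - ℓ) * stirling1 n ℓ / ((ℓ : ℝ) + 1) ^ k

/-- Poly-Cauchy numbers of the second kind `ĉ_n^{(k)}`. -/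
noncomputable def polyCauchy2 (k : ℤ) (n : ℕ) : ℝ :=
  (-1 : ℝ) ^ n * ∑ ℓ ∈ range (n + 1), (stirling1 n ℓ : ℝ) / ((ℓ : ℝ) + 1) ^ k

/-- Poly-Cauchy polynomials of the first kind `c_n^{(k)}(z)`. -/
noncomputable def polyCauchyPoly (k : ℤ) (n : ℕ) (z : ℝ) : ℝ :=
  ∑ m ∈ range (n + 1), (stirling1 n m : ℝ) * (-1 : ℝ) ^ (n - m) *
    ∑ i ∈ range (m + 1), (m.choose i : ℝ) * z ^ (m - i) / ((i : ℝ) + 1) ^ k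

/-- Shifted poly-Cauchy numbers of the first kind `c_{n,α}^{(k)}`. -/
noncomputable def shiftedPolyCauchy (k : ℤ) (n : ℕ) (α : ℝ) : ℝ :=
  ∑ m ∈ range (n + 1), (stirling1 n m : ℝ) * (-1 : ℝ) ^ (n - m) / ((m : ℝ) + α) ^ k

/-- Shifted poly-Cauchy numbers of the second kind `ĉ_{n,α}^{(k)}`. -/
noncomputable def shiftedPolyCauchy2 (k : ℤ) (n : ℕ) (α : ℝ) : ℝ :=
  (-1 : ℝ) ^ n * ∑ m ∈ range (n + 1), (stirling1 n m : ℝ) / ((m : ℝ) + α) ^ k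

lemma stirling2_eq_zero : ∀ n k, n < k → stirling2 n k = 0
  | 0, _+1, _ => rfl
  | n+1, k+1, h => by
    show (k+1) * stirling2 n (k+1) + stirling2 n k = 0
    rw [stirling2_eq_zero n (k+1) (by omega), stirling2_eq_zero n k (by omega)]
    simp

lemma stirling1_eq_zero : ∀ n k, n < k → stirling1 n k = 0
  | 0, _+1, _ => rfl
  | n+1, k+1, h => by
    show n * stirling1 n (k+1) + stirling1 n k = 0
    rw [stirling1_eq_zero n (k+1) (by omega), stirling1_eq_zero n k (by omega)]
    simp

lemma rise_eq (j : ℕ) (t : ℝ) :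
    ∏ i ∈ range j, (t + i) = ∑ ℓ ∈ range (j+1), (stirling1 j ℓ : ℝ) * t ^ ℓ := by
  induction j with
  | zero => simp [stirling1]
  | succ j ih =>
    rw [prod_range_succ, ih]
    rw [sum_range_succ' (fun ℓ => (stirling1 (j+1) ℓ : ℝ) * t ^ ℓ)]
    have h0 : (stirling1 (j+1) 0 : ℝ) = 0 := by norm_cast
    rw [h0]
    have hrec : ∀ ℓ, (stirling1 (j+1) (ℓ+1) : ℝ) = j * stirling1 j (ℓ+1) + stirling1 j ℓ := by
      intro ℓ; show ((j * stirling1 j (ℓ+1) + stirling1 j ℓ : ℕ) : ℝ) = _; push_cast; ring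
    simp only [hrec]
    have key : ∑ ℓ ∈ range (j+1), (stirling1 j ℓ : ℝ) * t ^ ℓ * (j : ℝ)
        = ∑ ℓ ∈ range (j+1), (j : ℝ) * (stirling1 j (ℓ+1) : ℝ) * t ^ (ℓ+1) := by
      rcases Nat.eq_zero_or_pos j with hj | hj
      · subst hj; simp
      · rw [sum_range_succ' (fun ℓ => (stirling1 j ℓ : ℝ) * t ^ ℓ * (j : ℝ))]
        rw [sum_range_succ (fun ℓ => (j:ℝ) * (stirling1 j (ℓ+1) : ℝ) * t ^ (ℓ+1)) j]
        rw [stirling1_eq_zero j (j+1) (by omega)]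
        have hz : stirling1 j 0 = 0 := by cases j with | zero => omega | succ m => rfl
        rw [hz]
        norm_num
        exact sum_congr rfl fun ℓ _ => by ring
    rw [mul_add, sum_mul, sum_mul, key, ← sum_add_distrib]
    norm_num
    exact sum_congr rfl fun ℓ _ => by ring

lemma fall_eq (j : ℕ) (t : ℝ) :
    ∏ i ∈ range j, (t - i) = ∑ ℓ ∈ range (j+1), (-1:ℝ)^(j-ℓ) * (stirling1 j ℓ : ℝ) * t ^ ℓ := by
  have h1 : ∏ i ∈ range j, (t - i) = (-1:ℝ)^j * ∏ i ∈ range j, ((-t) + i) := by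
    induction j with
    | zero => simp
    | succ j ih => rw [prod_range_succ, prod_range_succ, ih]; ring
  rw [h1, rise_eq, mul_sum]
  refine sum_congr rfl fun ℓ hℓ => ?_
  have hℓ' : ℓ ≤ j := Nat.lt_succ_iff.mp (mem_range.mp hℓ)
  have hj : j + ℓ = (j - ℓ) + 2*ℓ := by omega
  have e : (-1:ℝ)^(j+ℓ) = (-1:ℝ)^(j-ℓ) := by
    rw [hj, pow_add, pow_mul]; norm_num
  rw [← e, pow_add, neg_pow]
  ring

lemma cont_ff (j : ℕ) : Continuous fun t : ℝ => ∏ i ∈ range j, (t - (i:ℝ)) :=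
  continuous_finset_prod _ fun i _ => continuous_id.sub continuous_const

lemma polyCauchy_int (j : ℕ) :
    polyCauchy 1 j = ∫ t in (0:ℝ)..1, ∏ i ∈ range j, (t - i) := by
  have hInt : ∀ ℓ ∈ range (j+1), IntervalIntegrable
      (fun t : ℝ => (-1:ℝ)^(j-ℓ) * (stirling1 j ℓ : ℝ) * t ^ ℓ) MeasureTheory.volume 0 1 :=
    fun ℓ _ => ((continuous_const.mul (continuous_pow ℓ)).intervalIntegrable 0 1)
  have h2 : (∫ t in (0:ℝ)..1, ∏ i ∈ range j, (t - i))
      = ∑ ℓ ∈ range (j+1), ∫ t in (0:ℝ)..1, (-1:ℝ)^(j-ℓ) * (stirling1 j ℓ : ℝ) * t ^ ℓ := by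
    rw [← intervalIntegral.integral_finset_sum hInt]
    exact intervalIntegral.integral_congr fun t _ => fall_eq j t
  rw [h2]
  simp only [polyCauchy]
  refine sum_congr rfl fun ℓ _ => ?_
  rw [intervalIntegral.integral_const_mul, integral_pow, zpow_one]
  norm_num
  rw [div_eq_mul_inv]

lemma key_sum (n : ℕ) (t : ℝ) :
    ∑ j ∈ range (n+1), (stirling2 (n+1) (j+1) : ℝ) * ∏ i ∈ range j, (t - i) = (t+1)^n := by
  induction n with
  | zero => simp [stirling2]
  | succ n ih =>
    have hrec : ∀ j : ℕ, (stirling2 (n+2) (j+1) : ℝ)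
        = ((j:ℝ)+1) * stirling2 (n+1) (j+1) + stirling2 (n+1) j := by
      intro j
      show (((j+1) * stirling2 (n+1) (j+1) + stirling2 (n+1) j : ℕ) : ℝ) = _
      push_cast; ring
    show ∑ j ∈ range (n+2), (stirling2 (n+2) (j+1) : ℝ) * ∏ i ∈ range j, (t - i) = (t+1)^(n+1)
    have split : ∑ j ∈ range (n+2), (stirling2 (n+2) (j+1) : ℝ) * ∏ i ∈ range j, (t - i)
        = (∑ j ∈ range (n+2), ((j:ℝ)+1) * (stirling2 (n+1) (j+1):ℝ) * ∏ i ∈ range j, (t - i))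
          + ∑ j ∈ range (n+2), (stirling2 (n+1) j : ℝ) * ∏ i ∈ range j, (t - i) := by
      rw [← sum_add_distrib]
      exact sum_congr rfl fun j _ => by rw [hrec]; ring
    have hA : ∑ j ∈ range (n+2), ((j:ℝ)+1) * (stirling2 (n+1) (j+1):ℝ) * ∏ i ∈ range j, (t - i)
        = ∑ j ∈ range (n+1), ((j:ℝ)+1) * (stirling2 (n+1) (j+1):ℝ) * ∏ i ∈ range j, (t - i) := by
      rw [sum_range_succ, stirling2_eq_zero (n+1) (n+2) (by omega)]
      norm_num
    have hB : ∑ j ∈ range (n+2), (stirling2 (n+1) j : ℝ) * ∏ i ∈ range j, (t - i)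
        = ∑ j ∈ range (n+1), (stirling2 (n+1) (j+1) : ℝ) * ((∏ i ∈ range j, (t - i)) * (t - j)) := by
      rw [sum_range_succ' (fun j => (stirling2 (n+1) j : ℝ) * ∏ i ∈ range j, (t - i))]
      have hz : stirling2 (n+1) 0 = 0 := rfl
      rw [hz]
      norm_num
      exact sum_congr rfl fun j _ => by rw [prod_range_succ]
    rw [split, hA, hB, ← sum_add_distrib]
    have hc : ∑ j ∈ range (n+1), (((j:ℝ)+1) * (stirling2 (n+1) (j+1):ℝ) * ∏ i ∈ range j, (t - i)
        + (stirling2 (n+1) (j+1) : ℝ) * ((∏ i ∈ range j, (t - i)) * (t - j)))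
        = (t+1) * ∑ j ∈ range (n+1), (stirling2 (n+1) (j+1):ℝ) * ∏ i ∈ range j, (t - i) := by
      rw [mul_sum]
      exact sum_congr rfl fun j _ => by ring
    rw [hc, ih]
    ring

theorem stmt5 (n : ℕ) :
    ∑ j ∈ Finset.range (n + 1), (stirling2 (n + 1) (j + 1) : ℝ) * polyCauchy 1 j =
      (2 ^ (n + 1) - 1) / ((n : ℝ) + 1) := by
  have h1 : ∀ j ∈ range (n+1), (stirling2 (n+1) (j+1) : ℝ) * polyCauchy 1 j
      = ∫ t in (0:ℝ)..1, (stirling2 (n+1) (j+1) : ℝ) * ∏ i ∈ range j, (t - i) := by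
    intro j _
    rw [polyCauchy_int, intervalIntegral.integral_const_mul]
  rw [sum_congr rfl h1,
    ← intervalIntegral.integral_finset_sum (f := fun j t => (stirling2 (n+1) (j+1) : ℝ) * ∏ i ∈ range j, (t - (i:ℝ)))
      (fun j _ => (continuous_const.mul (cont_ff j)).intervalIntegrable 0 1),
    intervalIntegral.integral_congr (g := fun t : ℝ => (t+1)^n) (fun t _ => key_sum n t)]
  have h2 := intervalIntegral.integral_comp_add_right (a := (0:ℝ)) (b := 1)
    (fun x : ℝ => x ^ n) 1
  rw [h2, integral_pow]
  push_cast
  norm_num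
end

section
/- For integers n, r, k with n ≥ r ≥ 1, the r-Stirling transform of the poly-Cauchy numbers of the second kind satisfies: ∑_{j=r}^{n} S_r(n,j) · ĉ_j^{(k)} = ∑_{ℓ=1}^{r} (-1)^n s(r,ℓ) / (n-r+ℓ+1)^k. -/
open Finset

lemma stirling1_pos_zero (j : ℕ) (hj : 1 ≤ j) : stirling1 j 0 = 0 := by
  match j, hj with
  | j + 1, _ => rfl

lemma stirling1_eq_zero_of_lt : ∀ n m, n < m → stirling1 n m = 0 := by
  intro n
  induction n with
  | zero => intro m h; match m, h with | m + 1, _ => rfl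
  | succ n ih =>
    intro m h
    match m, h with
    | m + 1, h =>
      simp only [stirling1]
      rw [ih (m + 1) (by omega), ih m (by omega)]
      simp

lemma stirling1_succ (n m : ℕ) :
    stirling1 (n + 1) (m + 1) = n * stirling1 n (m + 1) + stirling1 n m := rfl

lemma rStirling2_eq_zero_of_gt (r : ℕ) : ∀ n j, n < j → rStirling2 r n j = 0 := by
  intro n
  induction n with
  | zero =>
    intro j h
    simp only [rStirling2]
    rw [if_neg]; omega
  | succ n ih =>
    intro j h
    simp only [rStirling2]
    split
    · rfl
    · split
      · rw [if_neg]; omega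
      · match j, h with
        | j + 1, h =>
          show (j + 1) * rStirling2 r n (j + 1) + rStirling2 r n j = 0
          rw [ih (j + 1) (by omega), ih j (by omega)]; simp

lemma rStirling2_eq_zero_of_lt (r : ℕ) : ∀ n j, j < r → rStirling2 r n j = 0 := by
  intro n
  induction n with
  | zero =>
    intro j h
    simp only [rStirling2]
    rw [if_neg]; omega
  | succ n ih =>
    intro j h
    simp only [rStirling2]
    split
    · rfl
    · split
      · rw [if_neg]; omega
      · match j with
        | 0 => simp
        | j + 1 =>
          show (j + 1) * rStirling2 r n (j + 1) + rStirling2 r n j = 0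
          rw [ih (j + 1) h, ih j (by omega)]; simp

lemma rStirling2_self (r : ℕ) (hr : 1 ≤ r) (j : ℕ) :
    rStirling2 r r j = if j = r then 1 else 0 := by
  match r, hr with
  | r + 1, _ =>
    simp only [rStirling2]
    norm_num

lemma rStirling2_succ (r n j : ℕ) (hrn : r ≤ n) (hj : 1 ≤ j) :
    rStirling2 r (n + 1) j = j * rStirling2 r n j + rStirling2 r n (j - 1) := by
  match j, hj with
  | j + 1, _ =>
    simp only [rStirling2]
    rw [if_neg (by omega), if_neg (by omega)]
    rfl

lemma Tsum_eq (r : ℕ) (hr : 1 ≤ r) : ∀ n, r ≤ n → ∀ m,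
    ∑ j ∈ Icc r n, (rStirling2 r n j : ℤ) * (-1) ^ j * (stirling1 j m : ℤ)
      = (-1) ^ n * (stirling1 r (m - (n - r)) : ℤ) := by
  intro n
  induction n with
  | zero => intro h; omega
  | succ n ih =>
    intro hn m
    rcases eq_or_lt_of_le hn with h | h
    · rw [← h, Icc_self, sum_singleton, rStirling2_self r hr r, if_pos rfl,
        Nat.sub_self, Nat.sub_zero]
      push_cast; ring
    · have hrn : r ≤ n := by omega
      cases m with
      | zero =>
        rw [Finset.sum_eq_zero, show (0 : ℕ) - (n + 1 - r) = 0 by omega,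
          stirling1_pos_zero r hr]
        · simp
        · intro j hj
          simp only [mem_Icc] at hj
          rw [stirling1_pos_zero j (by omega)]
          simp
      | succ m =>
        have key : ∀ j ∈ Icc r (n + 1),
            (rStirling2 r (n + 1) j : ℤ) * (-1) ^ j * (stirling1 j (m + 1) : ℤ)
              = ((j : ℤ) * (rStirling2 r n j : ℤ)) * (-1) ^ j * (stirling1 j (m + 1) : ℤ)
                + (rStirling2 r n (j - 1) : ℤ) * (-1) ^ j * (stirling1 j (m + 1) : ℤ) := by
          intro j hj
          simp only [mem_Icc] at hj
          rw [rStirling2_succ r n j hrn (by omega)]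
          push_cast
          ring
        rw [Finset.sum_congr rfl key, Finset.sum_add_distrib]
        have sum1 : ∑ j ∈ Icc r (n + 1),
            ((j : ℤ) * (rStirling2 r n j : ℤ)) * (-1) ^ j * (stirling1 j (m + 1) : ℤ)
            = ∑ j ∈ Icc r n,
            ((j : ℤ) * (rStirling2 r n j : ℤ)) * (-1) ^ j * (stirling1 j (m + 1) : ℤ) := by
          rw [Finset.sum_Icc_succ_top (by omega), rStirling2_eq_zero_of_gt r n (n + 1) (by omega)]
          push_cast; ring
        have hmap : Icc r (n + 1) = Finset.map (addRightEmbedding 1) (Icc (r - 1) n) := by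
          rw [Finset.map_add_right_Icc]
          congr 1
          omega
        have sum2 : ∑ j ∈ Icc r (n + 1),
            (rStirling2 r n (j - 1) : ℤ) * (-1) ^ j * (stirling1 j (m + 1) : ℤ)
            = ∑ j ∈ Icc r n,
            (rStirling2 r n j : ℤ) * (-1) ^ (j + 1) *
              ((j : ℤ) * (stirling1 j (m + 1) : ℤ) + (stirling1 j m : ℤ)) := by
          rw [hmap, Finset.sum_map]
          simp only [addRightEmbedding_apply, Nat.add_sub_cancel]
          rw [← Finset.sum_subset (Finset.Icc_subset_Icc_left (by omega : r - 1 ≤ r))]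
          · apply Finset.sum_congr rfl
            intro j _
            rw [stirling1_succ]
            push_cast; ring
          · intro j hj hj'
            simp only [mem_Icc] at hj hj'
            rw [rStirling2_eq_zero_of_lt r n j (by omega)]
            simp
        rw [sum1, sum2, ← Finset.sum_add_distrib]
        have : ∀ j ∈ Icc r n,
            ((j : ℤ) * (rStirling2 r n j : ℤ)) * (-1) ^ j * (stirling1 j (m + 1) : ℤ)
              + (rStirling2 r n j : ℤ) * (-1) ^ (j + 1) *
                ((j : ℤ) * (stirling1 j (m + 1) : ℤ) + (stirling1 j m : ℤ))
            = -((rStirling2 r n j : ℤ) * (-1) ^ j * (stirling1 j m : ℤ)) := by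
          intro j _
          ring
        rw [Finset.sum_congr rfl this, Finset.sum_neg_distrib, ih hrn m,
          show m + 1 - (n + 1 - r) = m - (n - r) by omega]
        ring

theorem stmt6 (n r : ℕ) (k : ℤ) (hr : 1 ≤ r) (hn : r ≤ n) :
    ∑ j ∈ Finset.Icc r n, (rStirling2 r n j : ℝ) * polyCauchy2 k j =
      ∑ ℓ ∈ Finset.Icc 1 r, (-1 : ℝ) ^ n * (stirling1 r ℓ : ℝ) /
        ((n + ℓ - r + 1 : ℕ) : ℝ) ^ k := by
  have hinner : ∀ j ∈ Icc r n, (rStirling2 r n j : ℝ) * polyCauchy2 k j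
      = ∑ m ∈ range (n + 1),
          (rStirling2 r n j : ℝ) * (-1 : ℝ) ^ j * (stirling1 j m : ℝ) / ((m : ℝ) + 1) ^ k := by
    intro j hj
    simp only [mem_Icc] at hj
    rw [polyCauchy2,
      ← Finset.sum_subset (Finset.range_subset_range.mpr (by omega : j + 1 ≤ n + 1))]
    · rw [Finset.mul_sum, Finset.mul_sum]
      apply Finset.sum_congr rfl
      intro m _
      ring
    · intro m hm hm'
      simp only [mem_range] at hm hm'
      rw [stirling1_eq_zero_of_lt j m (by omega)]
      simp
  rw [Finset.sum_congr rfl hinner, Finset.sum_comm]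
  have hcol : ∀ m ∈ range (n + 1),
      (∑ j ∈ Icc r n,
        (rStirling2 r n j : ℝ) * (-1 : ℝ) ^ j * (stirling1 j m : ℝ) / ((m : ℝ) + 1) ^ k)
      = (-1 : ℝ) ^ n * (stirling1 r (m - (n - r)) : ℝ) / ((m : ℝ) + 1) ^ k := by
    intro m _
    rw [← Finset.sum_div]
    congr 1
    have h := Tsum_eq r hr n hn m
    calc ∑ j ∈ Icc r n, (rStirling2 r n j : ℝ) * (-1 : ℝ) ^ j * (stirling1 j m : ℝ)
        = ((∑ j ∈ Icc r n, (rStirling2 r n j : ℤ) * (-1) ^ j * (stirling1 j m : ℤ) : ℤ) : ℝ) := by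
          push_cast; ring
      _ = (-1 : ℝ) ^ n * (stirling1 r (m - (n - r)) : ℝ) := by rw [h]; push_cast; ring
  rw [Finset.sum_congr rfl hcol,
    ← Finset.sum_subset (show Icc (n - r + 1) n ⊆ range (n + 1) by
      intro m hm; simp only [mem_Icc] at hm; simp only [mem_range]; omega)]
  · have hmap : Icc (n - r + 1) n = Finset.map (addRightEmbedding (n - r)) (Icc 1 r) := by
      rw [Finset.map_add_right_Icc]
      congr 1 <;> omega
    rw [hmap, Finset.sum_map]
    apply Finset.sum_congr rfl
    intro ℓ hℓ
    simp only [mem_Icc] at hℓ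
    simp only [addRightEmbedding_apply, Nat.add_sub_cancel]
    rw [show n + ℓ - r + 1 = ℓ + (n - r) + 1 by omega]
    push_cast
    ring
  · intro m hm hm'
    simp only [mem_range] at hm
    simp only [mem_Icc] at hm'
    rw [show m - (n - r) = 0 by omega, stirling1_pos_zero r hr]
    simp
end

section
/- For integers n, r, k with n ≥ r-1 ≥ 0, ∑_{j=r-1}^{n} S_r(n+1, j+1) · ĉ_j^{(k)} = ∑_{ℓ=1}^{r} (-1)^{r-ℓ} s(r,ℓ) · ∑_{i=0}^{n-r+ℓ} C(n-r+ℓ, i) · (-1)^i / (i+1)^k. -/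
open Finset Polynomial

noncomputable def Lk (k : ℤ) : Polynomial ℝ →ₗ[ℝ] ℝ :=
  Polynomial.lsum (fun i => LinearMap.toSpanSingleton ℝ ℝ (1 / ((i : ℝ) + 1) ^ k))

lemma Lk_monomial (k : ℤ) (i : ℕ) (a : ℝ) :
    Lk k (Polynomial.monomial i a) = a / ((i : ℝ) + 1) ^ k := by
  simp [Lk, Polynomial.lsum_apply, Polynomial.sum_monomial_index,
    LinearMap.toSpanSingleton_apply, smul_eq_mul, mul_one_div, div_eq_mul_inv]

lemma coeff_asc : ∀ j ℓ : ℕ, (ascPochhammer ℝ j).coeff ℓ = (stirling1 j ℓ : ℝ) := by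
  intro j
  induction j with
  | zero =>
    intro ℓ
    cases ℓ with
    | zero => simp [stirling1]
    | succ ℓ => simp [stirling1, Polynomial.coeff_one]
  | succ j ih =>
    intro ℓ
    rw [ascPochhammer_succ_right, mul_add,
      show ((j : ℝ[X])) = Polynomial.C (j : ℝ) by simp,
      Polynomial.coeff_add, Polynomial.coeff_mul_C]
    cases ℓ with
    | zero =>
      rw [Polynomial.mul_coeff_zero, Polynomial.coeff_X_zero, mul_zero, zero_add, ih]
      cases j with
      | zero => simp [stirling1]
      | succ j => simp [stirling1]
    | succ ℓ =>
      rw [Polynomial.coeff_mul_X, ih, ih]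
      show _ = ((j * stirling1 j (ℓ+1) + stirling1 j ℓ : ℕ) : ℝ)
      push_cast
      ring

lemma Lk_asc (k : ℤ) (j : ℕ) :
    Lk k (ascPochhammer ℝ j) = ∑ ℓ ∈ range (j + 1), (stirling1 j ℓ : ℝ) / ((ℓ : ℝ) + 1) ^ k := by
  conv_lhs => rw [(ascPochhammer ℝ j).as_sum_range' (j + 1)
    (by rw [ascPochhammer_natDegree]; omega)]
  rw [map_sum]
  exact Finset.sum_congr rfl fun ℓ _ => by rw [Lk_monomial, coeff_asc]

lemma one_sub_X_pow (m : ℕ) : ((1 : ℝ[X]) - X) ^ m =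
    ∑ i ∈ range (m + 1), Polynomial.monomial i ((-1 : ℝ) ^ i * (m.choose i : ℝ)) := by
  rw [sub_eq_add_neg, add_comm, add_pow]
  refine Finset.sum_congr rfl fun i _ => ?_
  rw [neg_pow, one_pow, mul_one, ← Polynomial.C_mul_X_pow_eq_monomial, Polynomial.C_mul,
    map_pow, map_neg, map_one, Polynomial.C_eq_natCast]
  ring

lemma Lk_one_sub (k : ℤ) (m : ℕ) : Lk k ((1 - Polynomial.X : ℝ[X]) ^ m) =
    ∑ i ∈ range (m + 1), (m.choose i : ℝ) * (-1 : ℝ) ^ i / ((i : ℝ) + 1) ^ k := by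
  rw [one_sub_X_pow, map_sum]
  exact Finset.sum_congr rfl fun i _ => by rw [Lk_monomial]; ring

lemma rS2_zero_lt (r : ℕ) : ∀ n j : ℕ, j < r → rStirling2 r n j = 0 := by
  intro n
  induction n with
  | zero =>
    intro j h
    show (if r = 0 ∧ j = 0 then 1 else 0) = 0
    rw [if_neg (by omega)]
  | succ n ih =>
    intro j h
    cases j with
    | zero =>
      show (if n + 1 < r then 0
        else if n + 1 = r then (if 0 = r then 1 else 0)
        else 0 * rStirling2 r n 0 + 0) = 0
      split
      · rfl
      split
      · rw [if_neg (by omega)]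
      · simp
    | succ j' =>
      show (if n + 1 < r then 0
        else if n + 1 = r then (if j' + 1 = r then 1 else 0)
        else (j' + 1) * rStirling2 r n (j' + 1) + rStirling2 r n j') = 0
      split
      · rfl
      split
      · rw [if_neg (by omega)]
      · rw [ih _ h, ih j' (by omega)]; ring

lemma rS2_zero_gt (r : ℕ) : ∀ n j : ℕ, n < j → rStirling2 r n j = 0 := by
  intro n
  induction n with
  | zero =>
    intro j h
    show (if r = 0 ∧ j = 0 then 1 else 0) = 0
    rw [if_neg (by omega)]
  | succ n ih =>
    intro j h
    cases j with
    | zero => exact absurd h (by omega)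
    | succ j' =>
      show (if n + 1 < r then 0
        else if n + 1 = r then (if j' + 1 = r then 1 else 0)
        else (j' + 1) * rStirling2 r n (j' + 1) + rStirling2 r n j') = 0
      split
      · rfl
      split
      · rw [if_neg (by omega)]
      · rw [ih _ (by omega), ih j' (by omega)]; ring

lemma rS2_rec (r n j : ℕ) (h : r ≤ n) :
    rStirling2 r (n + 1) (j + 1) = (j + 1) * rStirling2 r n (j + 1) + rStirling2 r n j := by
  show (if n + 1 < r then 0
    else if n + 1 = r then (if j + 1 = r then 1 else 0)
    else (j + 1) * rStirling2 r n (j + 1) + rStirling2 r n j) = _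
  rw [if_neg (by omega), if_neg (by omega)]

lemma rS2_diag (r j : ℕ) (hr : 1 ≤ r) : rStirling2 r r j = if j = r then 1 else 0 := by
  obtain ⟨r', rfl⟩ : ∃ r', r = r' + 1 := ⟨r - 1, by omega⟩
  show (if r' + 1 < r' + 1 then 0
    else if r' + 1 = r' + 1 then (if j = r' + 1 then 1 else 0)
    else j * rStirling2 (r' + 1) r' j +
      (match j with | 0 => 0 | j' + 1 => rStirling2 (r' + 1) r' j')) = _
  simp

lemma stirling1_zero_gt : ∀ n j : ℕ, n < j → stirling1 n j = 0 := by
  intro n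
  induction n with
  | zero => intro j h; cases j with | zero => omega | succ j => rfl
  | succ n ih =>
    intro j h
    cases j with
    | zero => omega
    | succ j' => show n * stirling1 n (j' + 1) + stirling1 n j' = 0
                 rw [ih _ (by omega), ih j' (by omega)]; ring

lemma A_lemma : ∀ r : ℕ, ascPochhammer ℝ r =
    ∑ m ∈ range (r + 1), (stirling1 (r + 1) (m + 1) : ℝ[X]) * (Polynomial.X - 1) ^ m := by
  intro r
  induction r with
  | zero => simp [stirling1]
  | succ r ih =>
    have key : ∀ m : ℕ, (stirling1 (r + 1 + 1) (m + 1) : ℝ[X]) =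
        ((r + 1 : ℕ) : ℝ[X]) * (stirling1 (r + 1) (m + 1) : ℝ[X])
          + (stirling1 (r + 1) m : ℝ[X]) := by
      intro m
      rw [show stirling1 (r + 1 + 1) (m + 1)
          = (r + 1) * stirling1 (r + 1) (m + 1) + stirling1 (r + 1) m from rfl]
      push_cast
      ring
    have expand : ∑ m ∈ range (r + 1 + 1), (stirling1 (r + 1 + 1) (m + 1) : ℝ[X]) *
          (Polynomial.X - 1) ^ m
        = (∑ m ∈ range (r + 1 + 1), ((r + 1 : ℕ) : ℝ[X]) * ((stirling1 (r + 1) (m + 1) : ℝ[X]) *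
            (Polynomial.X - 1) ^ m))
          + ∑ m ∈ range (r + 1 + 1), (stirling1 (r + 1) m : ℝ[X]) * (Polynomial.X - 1) ^ m := by
      rw [← Finset.sum_add_distrib]
      refine Finset.sum_congr rfl fun m _ => ?_
      rw [key m]
      ring
    have h1 : ∑ m ∈ range (r + 1 + 1), ((r + 1 : ℕ) : ℝ[X]) * ((stirling1 (r + 1) (m + 1) : ℝ[X]) *
          (Polynomial.X - 1) ^ m)
        = ((r + 1 : ℕ) : ℝ[X]) * ascPochhammer ℝ r := by
      rw [← Finset.mul_sum, Finset.sum_range_succ, stirling1_zero_gt (r + 1) (r + 1 + 1) (by omega),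
        ← ih]
      push_cast
      ring
    have h2 : ∑ m ∈ range (r + 1 + 1), (stirling1 (r + 1) m : ℝ[X]) * (Polynomial.X - 1) ^ m
        = (Polynomial.X - 1) * ascPochhammer ℝ r := by
      rw [Finset.sum_range_succ', show stirling1 (r + 1) 0 = 0 from rfl, ih, Finset.mul_sum]
      push_cast
      rw [zero_mul, add_zero]
      refine Finset.sum_congr rfl fun m _ => ?_
      ring
    rw [expand, h1, h2, ascPochhammer_succ_right]
    push_cast
    ring

lemma master (r : ℕ) (hr : 1 ≤ r) : ∀ n, r - 1 ≤ n →
    ∑ j ∈ Finset.Icc (r - 1) n,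
        (rStirling2 r (n + 1) (j + 1) : ℝ[X]) * ((-1 : ℝ[X]) ^ j * ascPochhammer ℝ j)
      = (-1 : ℝ[X]) ^ (r - 1) *
          ((1 - Polynomial.X) ^ (n + 1 - r) * ascPochhammer ℝ (r - 1)) := by
  refine Nat.le_induction ?_ ?_
  · rw [Finset.Icc_self, Finset.sum_singleton, show r - 1 + 1 = r by omega, rS2_diag r r hr,
      if_pos rfl, show r - r = 0 by omega]
    push_cast
    ring
  · intro n hn ih
    have hrn : r ≤ n + 1 := by omega
    have step : ∀ j ∈ Finset.Icc (r - 1) (n + 1),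
        (rStirling2 r (n + 1 + 1) (j + 1) : ℝ[X]) * ((-1 : ℝ[X]) ^ j * ascPochhammer ℝ j)
        = ((j + 1 : ℕ) : ℝ[X]) *
            ((rStirling2 r (n + 1) (j + 1) : ℝ[X]) * ((-1 : ℝ[X]) ^ j * ascPochhammer ℝ j))
          + (rStirling2 r (n + 1) j : ℝ[X]) * ((-1 : ℝ[X]) ^ j * ascPochhammer ℝ j) := by
      intro j _
      rw [rS2_rec r (n + 1) j hrn]
      push_cast
      ring
    rw [Finset.sum_congr rfl step, Finset.sum_add_distrib]
    have hA : ∑ j ∈ Finset.Icc (r - 1) (n + 1), ((j + 1 : ℕ) : ℝ[X]) *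
          ((rStirling2 r (n + 1) (j + 1) : ℝ[X]) * ((-1 : ℝ[X]) ^ j * ascPochhammer ℝ j))
        = ∑ j ∈ Finset.Icc (r - 1) n, ((j + 1 : ℕ) : ℝ[X]) *
          ((rStirling2 r (n + 1) (j + 1) : ℝ[X]) * ((-1 : ℝ[X]) ^ j * ascPochhammer ℝ j)) := by
      rw [Finset.sum_Icc_succ_top (show r - 1 ≤ n + 1 by omega),
        rS2_zero_gt r (n + 1) (n + 1 + 1) (by omega)]
      push_cast
      ring
    have hB : ∑ j ∈ Finset.Icc (r - 1) (n + 1),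
          (rStirling2 r (n + 1) j : ℝ[X]) * ((-1 : ℝ[X]) ^ j * ascPochhammer ℝ j)
        = ∑ j ∈ Finset.Icc (r - 1) n,
          (rStirling2 r (n + 1) (j + 1) : ℝ[X]) *
            ((-1 : ℝ[X]) ^ (j + 1) * ascPochhammer ℝ (j + 1)) := by
      rw [← Finset.add_sum_Ioc_eq_sum_Icc (show r - 1 ≤ n + 1 by omega),
        rS2_zero_lt r (n + 1) (r - 1) (by omega), ← Finset.Icc_add_one_left_eq_Ioc,
        show r - 1 + 1 = r by omega,
        show Finset.Icc r (n + 1)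
          = Finset.map (addRightEmbedding 1) (Finset.Icc (r - 1) n) by
          rw [Finset.map_add_right_Icc]; congr 1; omega,
        Finset.sum_map]
      simp [addRightEmbedding_apply]
    rw [hA, hB, ← Finset.sum_add_distrib]
    have combine : ∀ j ∈ Finset.Icc (r - 1) n,
        ((j + 1 : ℕ) : ℝ[X]) *
            ((rStirling2 r (n + 1) (j + 1) : ℝ[X]) * ((-1 : ℝ[X]) ^ j * ascPochhammer ℝ j))
          + (rStirling2 r (n + 1) (j + 1) : ℝ[X]) *
            ((-1 : ℝ[X]) ^ (j + 1) * ascPochhammer ℝ (j + 1))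
        = (1 - Polynomial.X) *
            ((rStirling2 r (n + 1) (j + 1) : ℝ[X]) * ((-1 : ℝ[X]) ^ j * ascPochhammer ℝ j)) := by
      intro j _
      rw [ascPochhammer_succ_right]
      push_cast
      ring
    rw [Finset.sum_congr rfl combine, ← Finset.mul_sum, ih,
      show n + 1 + 1 - r = (n + 1 - r) + 1 by omega, pow_succ]
    ring

lemma polyCauchy2_eq (k : ℤ) (j : ℕ) :
    polyCauchy2 k j = (-1 : ℝ) ^ j * Lk k (ascPochhammer ℝ j) := by
  rw [Lk_asc]; rfl

theorem stmt7 (n r : ℕ) (k : ℤ) (hr : 1 ≤ r) (hn : r - 1 ≤ n) :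
    ∑ j ∈ Finset.Icc (r - 1) n, (rStirling2 r (n + 1) (j + 1) : ℝ) * polyCauchy2 k j =
      ∑ ℓ ∈ Finset.Icc 1 r, (-1 : ℝ) ^ (r - ℓ) * (stirling1 r ℓ : ℝ) *
        ∑ i ∈ Finset.range (n + ℓ - r + 1),
          ((n + ℓ - r).choose i : ℝ) * (-1 : ℝ) ^ i / ((i : ℝ) + 1) ^ k := by
  have key := congrArg (Lk k) (master r hr n hn)
  rw [map_sum] at key
  have lhs_eq : ∀ j ∈ Finset.Icc (r - 1) n,
      (rStirling2 r (n + 1) (j + 1) : ℝ) * polyCauchy2 k j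
      = Lk k ((rStirling2 r (n + 1) (j + 1) : ℝ[X]) *
          ((-1 : ℝ[X]) ^ j * ascPochhammer ℝ j)) := by
    intro j _
    have hs : (rStirling2 r (n + 1) (j + 1) : ℝ[X]) * ((-1 : ℝ[X]) ^ j * ascPochhammer ℝ j)
        = ((rStirling2 r (n + 1) (j + 1) : ℝ) * (-1 : ℝ) ^ j) • ascPochhammer ℝ j := by
      rw [Polynomial.smul_eq_C_mul, map_mul, map_pow, map_neg, map_one, Polynomial.C_eq_natCast]
      ring
    rw [hs, map_smul, smul_eq_mul, polyCauchy2_eq]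
    ring
  rw [Finset.sum_congr rfl lhs_eq, key]
  -- now compute RHS
  have hA := A_lemma (r - 1)
  rw [show r - 1 + 1 = r by omega] at hA
  have hpoly : (-1 : ℝ[X]) ^ (r - 1) *
        ((1 - Polynomial.X) ^ (n + 1 - r) * ascPochhammer ℝ (r - 1))
      = ∑ m ∈ range r, ((-1 : ℝ) ^ (r - 1) * (stirling1 r (m + 1) : ℝ) * (-1 : ℝ) ^ m) •
          ((1 - Polynomial.X) ^ (n + 1 - r + m) : ℝ[X]) := by
    rw [hA, Finset.mul_sum, Finset.mul_sum]
    refine Finset.sum_congr rfl fun m _ => ?_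
    rw [Polynomial.smul_eq_C_mul, pow_add,
      show (Polynomial.X - 1 : ℝ[X]) = (-1) * (1 - Polynomial.X) by ring, mul_pow]
    simp only [map_mul, map_pow, map_neg, map_one, Polynomial.C_eq_natCast]
    ring
  rw [hpoly, map_sum]
  have rhs_eq : ∀ m ∈ range r,
      Lk k ((((-1 : ℝ) ^ (r - 1) * (stirling1 r (m + 1) : ℝ) * (-1 : ℝ) ^ m) •
          ((1 - Polynomial.X) ^ (n + 1 - r + m) : ℝ[X])))
      = (-1 : ℝ) ^ (r - 1 - m) * (stirling1 r (m + 1) : ℝ) *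
        ∑ i ∈ Finset.range (n + 1 - r + m + 1),
          (((n + 1 - r + m).choose i : ℝ)) * (-1 : ℝ) ^ i / ((i : ℝ) + 1) ^ k := by
    intro m hm
    rw [map_smul, smul_eq_mul, Lk_one_sub]
    have hsgn : (-1 : ℝ) ^ (r - 1 - m) = (-1 : ℝ) ^ (r - 1) * (-1 : ℝ) ^ m := by
      have h1 : (-1 : ℝ) ^ (r - 1) = (-1 : ℝ) ^ (r - 1 - m) * (-1 : ℝ) ^ m := by
        rw [← pow_add]
        congr 1
        simp only [Finset.mem_range] at hm
        omega
      have h2 : (-1 : ℝ) ^ m * (-1 : ℝ) ^ m = 1 := by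
        rw [← pow_add, ← two_mul, pow_mul]
        norm_num
      rw [h1, mul_assoc, h2, mul_one]
    rw [hsgn]
    ring
  rw [Finset.sum_congr rfl rhs_eq]
  -- reindex Icc 1 r to range r
  rw [show Finset.Icc 1 r = Finset.map (addRightEmbedding 1) (Finset.range r) by
    rw [Nat.range_eq_Icc_zero_sub_one r (by omega), Finset.map_add_right_Icc]
    congr 1
    omega]
  rw [Finset.sum_map]
  refine Finset.sum_congr rfl fun m hm => ?_
  simp only [addRightEmbedding_apply]
  rw [show r - (m + 1) = r - 1 - m by omega, show n + (m + 1) - r = n + 1 - r + m by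
    simp only [Finset.mem_range] at hm; omega]
end

section
/- (Orthogonality of r-Stirling numbers) For integers n ≥ r ≥ 0 and any integer m, ∑_{k} (-1)^{n-k} s_r(n,k) · S_r(k,m) = δ_{m,n}, where s_r and S_r are the unsigned r-Stirling numbers of the first and second kind respectively. -/
open Finset

lemma rS1_lt (r n k : ℕ) (h : k < r) : rStirling1 r n k = 0 := by
  induction n generalizing k with
  | zero => simp only [rStirling1]; rw [if_neg]; omega
  | succ n ih =>
    cases k with
    | zero =>
      rw [rStirling1]
      split_ifs <;> first | rfl | omega | (rw [ih 0 h]; simp)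
    | succ k' =>
      rw [rStirling1]
      split_ifs <;> first | rfl | omega | (rw [ih _ h, ih k' (by omega)]; simp)

lemma rS1_gt (r n k : ℕ) (h : n < k) : rStirling1 r n k = 0 := by
  induction n generalizing k with
  | zero => simp only [rStirling1]; rw [if_neg]; omega
  | succ n ih =>
    cases k with
    | zero => omega
    | succ k' =>
      rw [rStirling1]
      split_ifs <;> first | rfl | omega | (rw [ih _ (by omega), ih k' (by omega)]; simp)

lemma rS1_self (r m : ℕ) : rStirling1 r r m = if m = r then 1 else 0 := by
  cases r with
  | zero => simp [rStirling1]
  | succ r => rw [rStirling1.eq_def]; simp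

lemma rS2_self (r m : ℕ) : rStirling2 r r m = if m = r then 1 else 0 := by
  cases r with
  | zero => simp [rStirling2]
  | succ r => rw [rStirling2.eq_def]; simp

lemma rS1_succ (r n : ℕ) (h : r ≤ n) (k : ℕ) :
    rStirling1 r (n + 1) (k + 1) = n * rStirling1 r n (k + 1) + rStirling1 r n k := by
  rw [rStirling1, if_neg (by omega), if_neg (by omega)]

lemma rS1_succ_zero (r n : ℕ) (h : r ≤ n) :
    rStirling1 r (n + 1) 0 = n * rStirling1 r n 0 := by
  rw [rStirling1, if_neg (by omega), if_neg (by omega)]; simp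

lemma rS2_succ (r n : ℕ) (h : r ≤ n) (m : ℕ) :
    rStirling2 r (n + 1) (m + 1) = (m + 1) * rStirling2 r n (m + 1) + rStirling2 r n m := by
  rw [rStirling2, if_neg (by omega), if_neg (by omega)]

lemma rS2_succ_zero (r n : ℕ) (h : r ≤ n) :
    rStirling2 r (n + 1) 0 = 0 := by
  rw [rStirling2, if_neg (by omega), if_neg (by omega)]; simp

theorem stmt11 (n r m : ℕ) (hn : r ≤ n) :
    ∑ k ∈ Finset.range (n + 1),
        (-1 : ℤ) ^ (n - k) * (rStirling1 r n k : ℤ) * (rStirling2 r k m : ℤ) =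
      if m = n then 1 else 0 := by
  induction n, hn using Nat.le_induction generalizing m with
  | base =>
    rw [Finset.sum_eq_single r]
    · rw [rS1_self, rS2_self]; simp
    · intro k _ hne
      rw [rS1_self, if_neg hne]; simp
    · intro h
      exact absurd (Finset.self_mem_range_succ r) h
  | succ n hn ih =>
    have key1 : ∀ k ∈ Finset.range (n + 2),
        (-1 : ℤ) ^ (n + 1 - k) * (rStirling1 r (n + 1) k : ℤ) * (rStirling2 r k m : ℤ) =
        (-1 : ℤ) ^ (n + 1 - k) * ((n : ℤ) * (rStirling1 r n k : ℤ)) * (rStirling2 r k m : ℤ)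
          + (-1 : ℤ) ^ (n + 1 - k) *
            (if k = 0 then 0 else (rStirling1 r n (k - 1) : ℤ)) * (rStirling2 r k m : ℤ) := by
      intro k _
      cases k with
      | zero => rw [rS1_succ_zero r n hn]; push_cast; ring
      | succ k' =>
        rw [rS1_succ r n hn k', if_neg (Nat.succ_ne_zero k'), Nat.add_sub_cancel]
        push_cast; ring
    rw [Finset.sum_congr rfl key1, Finset.sum_add_distrib]
    have hA : ∑ k ∈ Finset.range (n + 2),
        (-1 : ℤ) ^ (n + 1 - k) * ((n : ℤ) * (rStirling1 r n k : ℤ)) * (rStirling2 r k m : ℤ)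
        = -(n : ℤ) * (if m = n then 1 else 0) := by
      rw [Finset.sum_range_succ, rS1_gt r n (n + 1) (by omega)]
      simp only [Nat.cast_zero, mul_zero, zero_mul, add_zero]
      have : ∀ k ∈ Finset.range (n + 1),
          (-1 : ℤ) ^ (n + 1 - k) * ((n : ℤ) * (rStirling1 r n k : ℤ)) * (rStirling2 r k m : ℤ)
          = -(n : ℤ) * ((-1 : ℤ) ^ (n - k) * (rStirling1 r n k : ℤ) * (rStirling2 r k m : ℤ)) := by
        intro k hk
        rw [Finset.mem_range] at hk
        rw [show n + 1 - k = (n - k) + 1 by omega, pow_succ]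
        ring
      rw [Finset.sum_congr rfl this, ← Finset.mul_sum, ih m]
    rw [hA]
    have hB : ∑ k ∈ Finset.range (n + 2),
        (-1 : ℤ) ^ (n + 1 - k) *
          (if k = 0 then 0 else (rStirling1 r n (k - 1) : ℤ)) * (rStirling2 r k m : ℤ)
        = ∑ i ∈ Finset.range (n + 1),
            (-1 : ℤ) ^ (n - i) * (rStirling1 r n i : ℤ) * (rStirling2 r (i + 1) m : ℤ) := by
      rw [Finset.sum_range_succ']
      have h0 : ((-1 : ℤ) ^ (n + 1 - 0) *
          (if (0 : ℕ) = 0 then (0 : ℤ) else (rStirling1 r n (0 - 1) : ℤ)) *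
          (rStirling2 r 0 m : ℤ)) = 0 := by simp
      rw [h0, add_zero]
      refine Finset.sum_congr rfl fun i hi => ?_
      rw [show n + 1 - (i + 1) = n - i by omega, if_neg (Nat.succ_ne_zero i),
        Nat.add_sub_cancel]
    rw [hB]
    cases m with
    | zero =>
      have hC : ∀ i ∈ Finset.range (n + 1),
          (-1 : ℤ) ^ (n - i) * (rStirling1 r n i : ℤ) * (rStirling2 r (i + 1) 0 : ℤ) = 0 := by
        intro i _
        by_cases hir : i < r
        · rw [rS1_lt r n i hir]; simp
        · rw [rS2_succ_zero r i (by omega)]; simp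
      rw [Finset.sum_congr rfl hC, Finset.sum_const_zero]
      by_cases h : 0 = n
      · subst h; simp
      · rw [if_neg h, if_neg (by omega)]; ring
    | succ m' =>
      have hD : ∀ i ∈ Finset.range (n + 1),
          (-1 : ℤ) ^ (n - i) * (rStirling1 r n i : ℤ) * (rStirling2 r (i + 1) (m' + 1) : ℤ)
          = ((m' : ℤ) + 1) *
              ((-1 : ℤ) ^ (n - i) * (rStirling1 r n i : ℤ) * (rStirling2 r i (m' + 1) : ℤ))
            + (-1 : ℤ) ^ (n - i) * (rStirling1 r n i : ℤ) * (rStirling2 r i m' : ℤ) := by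
        intro i _
        by_cases hir : i < r
        · rw [rS1_lt r n i hir]; simp
        · rw [rS2_succ r i (by omega) m']; push_cast; ring
      rw [Finset.sum_congr rfl hD, Finset.sum_add_distrib, ← Finset.mul_sum, ih (m' + 1), ih m']
      by_cases h1 : m' + 1 = n
      · rw [if_pos h1, if_neg (by omega : ¬ m' = n), if_neg (by omega : ¬ m' + 1 = n + 1),
          ← h1]
        push_cast; ring
      · by_cases h2 : m' = n
        · rw [if_neg h1, if_pos h2, if_pos (by omega : m' + 1 = n + 1)]; ring
        · rw [if_neg h1, if_neg h2, if_neg (by omega : ¬ m' + 1 = n + 1)]; ring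
end
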